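/- Let E be a real Banach space, ε > 0, h : [0,∞) → E continuous, and v : [0,∞) → E differentiable with ε v'(t) = v(t) + h(t) for all t ≥ 0. Assume in addition that t ↦ e^{-t/ε} h(t) is Bochner integrable on [0,∞) and that there exists a sequence T_n → ∞ with v(T_n) → 0 in E. Then for every τ ≥ 0, v(τ) = −∫_τ^∞ ε⁻¹ e^{(τ−t)/ε} h(t) dt. -/

import Mathlib

open Real MeasureTheory Filter

/-- Infinite-horizon variation-of-constants formula for `ε v' = v + h` on `[0,∞)`:
if `e^{-t/ε} h(t)` is Bochner integrable on `[0,∞)` and `v(T_n) → 0` along some sequence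
`T_n → ∞`, then `v(τ) = −∫_τ^∞ ε⁻¹ e^{(τ−t)/ε} h(t) dt` for every `τ ≥ 0`. -/
theorem stmt_7 (E : Type*) [NormedAddCommGroup E] [NormedSpace ℝ E] [CompleteSpace E]
    (ε : ℝ) (hε : 0 < ε) (h : ℝ → E) (hh : ContinuousOn h (Set.Ici 0))
    (v v' : ℝ → E) (hv : ∀ t ∈ Set.Ici (0 : ℝ), HasDerivAt v (v' t) t)
    (hode : ∀ t ∈ Set.Ici (0 : ℝ), ε • v' t = v t + h t)
    (hint : IntegrableOn (fun t => Real.exp (-t / ε) • h t) (Set.Ici 0))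
    (T : ℕ → ℝ) (hT : Tendsto T atTop atTop)
    (hvT : Tendsto (fun n => v (T n)) atTop (nhds 0)) :
    ∀ τ : ℝ, 0 ≤ τ →
      v τ = -∫ t in Set.Ioi τ, (ε⁻¹ * Real.exp ((τ - t) / ε)) • h t := by
  intro τ hτ
  set g : ℝ → E := fun t => Real.exp (-t/ε) • v t with hg
  set g' : ℝ → E := fun t => (ε⁻¹ * Real.exp (-t/ε)) • h t with hg'
  have hderiv : ∀ t ∈ Set.Ici (0:ℝ), HasDerivAt g (g' t) t := by
    intro t ht
    have he : HasDerivAt (fun t => Real.exp (-t/ε)) (-ε⁻¹ * Real.exp (-t/ε)) t := by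
      have h1 : HasDerivAt (fun t : ℝ => -t/ε) (-ε⁻¹) t := by
        simpa [neg_div] using ((hasDerivAt_id t).neg.div_const ε)
      simpa [mul_comm] using h1.exp
    have hd := he.smul (hv t ht)
    have hvt : v' t = ε⁻¹ • (v t + h t) := by
      rw [← hode t ht, smul_smul, inv_mul_cancel₀ hε.ne', one_smul]
    convert hd using 1
    · rfl
    rw [hvt]
    simp only [hg', smul_smul, smul_add, neg_mul]
    module
  have hgcont : ContinuousOn g' (Set.Ici 0) := by
    apply ContinuousOn.smul _ hh
    exact (continuous_const.mul ((continuous_id.neg.div_const ε).rexp)).continuousOn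
  have hsub : Set.Ioi τ ⊆ Set.Ici (0:ℝ) := fun x hx => le_of_lt (lt_of_le_of_lt hτ hx)
  have hint' : IntegrableOn g' (Set.Ioi τ) := by
    have h0 : IntegrableOn (fun t => ε⁻¹ • (Real.exp (-t/ε) • h t)) (Set.Ioi τ) :=
      (hint.mono_set hsub).smul ε⁻¹
    exact h0.congr_fun (fun t _ => by simp [hg', smul_smul]) measurableSet_Ioi
  have key : ∀ᶠ n in atTop, ∫ t in τ..T n, g' t = g (T n) - g τ := by
    filter_upwards [hT.eventually_ge_atTop τ] with n hn
    apply intervalIntegral.integral_eq_sub_of_hasDerivAt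
    · intro t ht
      rw [Set.uIcc_of_le hn] at ht
      exact hderiv t (le_trans hτ ht.1)
    · apply (hgcont.mono ?_).intervalIntegrable
      rw [Set.uIcc_of_le hn]
      exact fun x hx => le_trans hτ hx.1
  have h1 : Tendsto (fun n => ∫ t in τ..T n, g' t) atTop (nhds (∫ t in Set.Ioi τ, g' t)) :=
    MeasureTheory.intervalIntegral_tendsto_integral_Ioi τ hint' hT
  have h2 : Tendsto (fun n => g (T n) - g τ) atTop (nhds (0 - g τ)) := by
    apply Tendsto.sub _ tendsto_const_nhds
    have he : Tendsto (fun n => Real.exp (-(T n)/ε)) atTop (nhds 0) := by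
      have hb : Tendsto (fun n => -(T n)/ε) atTop atBot := by
        apply Tendsto.atBot_div_const hε
        exact tendsto_neg_atBot_iff.mpr hT
      exact Real.tendsto_exp_atBot.comp hb
    simpa using he.smul hvT
  have heq : (∫ t in Set.Ioi τ, g' t) = -(g τ) := by
    have := tendsto_nhds_unique (h1.congr' key) h2
    simpa using this
  have hvτ : v τ = Real.exp (τ/ε) • g τ := by
    simp [hg, smul_smul, ← Real.exp_add, neg_div]
  have hgτ : g τ = -(∫ t in Set.Ioi τ, g' t) := by rw [heq, neg_neg]
  rw [hvτ, hgτ, smul_neg, ← integral_smul]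
  congr 1
  apply setIntegral_congr_fun measurableSet_Ioi
  intro t _
  simp only [hg', smul_smul]
  congr 1
  have hdiv : (τ - t)/ε = τ/ε + (-t/ε) := by ring
  rw [hdiv, Real.exp_add]
  ring
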